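/- Let c₁, c₂, c₃ ∈ (0,1) with c₁ + c₂ + c₃ = 2, and consider the linear maps B₁, B₂, B₃ : ℝ² → ℝ given by B₁(x,y) = x+y, B₂(x,y) = y, B₃(x,y) = x. Then the 2×2 matrix A with entries A₁₁ = c₃(1−c₃), A₂₂ = c₂(1−c₂), A₁₂ = A₂₁ = −(1−c₂)(1−c₃) is positive definite and satisfies A⁻¹ = Σ_{i=1}^{3} cᵢ Bᵢ* (Bᵢ A Bᵢ*)⁻¹ Bᵢ; moreover (det(A) / ∏_{i=1}^{3} det(Bᵢ A Bᵢ*)^{cᵢ})^{1/2} = ((1−c₁)^{1−c₁} (1−c₂)^{1−c₂} (1−c₃)^{1−c₃} / (c₁^{c₁} c₂^{c₂} c₃^{c₃}))^{1/2}. -/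

import Mathlib

open Matrix

lemma inv_fin_one' (x : ℝ) (hx : x ≠ 0) : (!![x])⁻¹ = !![x⁻¹] := by
  apply Matrix.inv_eq_right_inv
  ext i j
  fin_cases i; fin_cases j
  simp [Matrix.mul_apply, hx]

set_option maxHeartbeats 1000000 in
/-- **The extremal matrix for Young's inequality** (Example in Section 2 of the paper).
For the Brascamp–Lieb datum `(c₁, (1,1)), (c₂, (0,1)), (c₃, (1,0))` on `ℝ²` with
`c₁ + c₂ + c₃ = 2`, the matrix
`A = [[c₃(1−c₃), −(1−c₂)(1−c₃)], [−(1−c₂)(1−c₃), c₂(1−c₂)]]` is positive definite,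
satisfies `A⁻¹ = ∑ cᵢ Bᵢ*(Bᵢ A Bᵢ*)⁻¹ Bᵢ`, and yields Beckner's sharp constant. -/
theorem young_extremal_matrix
    (c₁ c₂ c₃ : ℝ) (hc₁ : c₁ ∈ Set.Ioo (0 : ℝ) 1) (hc₂ : c₂ ∈ Set.Ioo (0 : ℝ) 1)
    (hc₃ : c₃ ∈ Set.Ioo (0 : ℝ) 1) (hsum : c₁ + c₂ + c₃ = 2)
    (B₁ B₂ B₃ : Matrix (Fin 1) (Fin 2) ℝ)
    (hB₁ : B₁ = !![1, 1]) (hB₂ : B₂ = !![0, 1]) (hB₃ : B₃ = !![1, 0])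
    (A : Matrix (Fin 2) (Fin 2) ℝ)
    (hA : A = !![c₃ * (1 - c₃), -((1 - c₂) * (1 - c₃));
                 -((1 - c₂) * (1 - c₃)), c₂ * (1 - c₂)]) :
    A.PosDef ∧
    A⁻¹ = c₁ • (B₁ᵀ * (B₁ * A * B₁ᵀ)⁻¹ * B₁) + c₂ • (B₂ᵀ * (B₂ * A * B₂ᵀ)⁻¹ * B₂) +
        c₃ • (B₃ᵀ * (B₃ * A * B₃ᵀ)⁻¹ * B₃) ∧
    Real.sqrt (A.det /
        ((B₁ * A * B₁ᵀ).det ^ c₁ * (B₂ * A * B₂ᵀ).det ^ c₂ * (B₃ * A * B₃ᵀ).det ^ c₃)) =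
      Real.sqrt (((1 - c₁) ^ (1 - c₁) * (1 - c₂) ^ (1 - c₂) * (1 - c₃) ^ (1 - c₃)) /
        (c₁ ^ c₁ * c₂ ^ c₂ * c₃ ^ c₃)) := by
  obtain ⟨h1p, h1l⟩ := hc₁
  obtain ⟨h2p, h2l⟩ := hc₂
  obtain ⟨h3p, h3l⟩ := hc₃
  have ha : (0:ℝ) < 1 - c₁ := by linarith
  have hb : (0:ℝ) < 1 - c₂ := by linarith
  have hd : (0:ℝ) < 1 - c₃ := by linarith
  have hM1 : B₁ * A * B₁ᵀ = !![c₁ * (1 - c₁)] := by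
    subst hA hB₁
    ext i j; fin_cases i; fin_cases j
    simp [Matrix.mul_apply, Fin.sum_univ_two]
    have h1 : c₁ = 2 - c₂ - c₃ := by linarith
    subst h1; ring
  have hM2 : B₂ * A * B₂ᵀ = !![c₂ * (1 - c₂)] := by
    subst hA hB₂
    ext i j; fin_cases i; fin_cases j
    simp [Matrix.mul_apply, Fin.sum_univ_two]
  have hM3 : B₃ * A * B₃ᵀ = !![c₃ * (1 - c₃)] := by
    subst hA hB₃
    ext i j; fin_cases i; fin_cases j
    simp [Matrix.mul_apply, Fin.sum_univ_two]
  have hdet : A.det = (1 - c₁) * (1 - c₂) * (1 - c₃) := by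
    subst hA
    simp [Matrix.det_fin_two]
    have h1 : c₁ = 2 - c₂ - c₃ := by linarith
    subst h1; ring
  have h1ne : c₁ * (1 - c₁) ≠ 0 := by positivity
  have h2ne : c₂ * (1 - c₂) ≠ 0 := by positivity
  have h3ne : c₃ * (1 - c₃) ≠ 0 := by positivity
  refine ⟨?_, ?_, ?_⟩
  · -- PosDef
    rw [Matrix.posDef_iff_dotProduct_mulVec]
    constructor
    · subst hA
      ext i j
      fin_cases i <;> fin_cases j <;> simp [Matrix.conjTranspose_apply]
    · intro x hx
      have hcoord : x 0 ≠ 0 ∨ x 1 ≠ 0 := by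
        by_contra h
        push_neg at h
        apply hx
        ext i; fin_cases i <;> simp [h.1, h.2]
      subst hA
      simp [Matrix.mulVec, dotProduct, Fin.sum_univ_two]
      have key : c₃ * (1 - c₃) * (x 0 * x 0) - 2 * ((1 - c₂) * (1 - c₃)) * (x 0 * x 1)
          + c₂ * (1 - c₂) * (x 1 * x 1)
          = (1 - c₁) * ((1 - c₃) * (x 0)^2 + (1 - c₂) * (x 1)^2)
            + (1 - c₂) * (1 - c₃) * (x 0 - x 1)^2 := by
        have h1 : c₁ = 2 - c₂ - c₃ := by linarith
        subst h1; ring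
      rcases hcoord with h | h
      · nlinarith [sq_pos_of_ne_zero h, sq_nonneg (x 1), sq_nonneg (x 0 - x 1),
          mul_pos ha hd, mul_pos hb hd, mul_pos ha hb]
      · nlinarith [sq_pos_of_ne_zero h, sq_nonneg (x 0), sq_nonneg (x 0 - x 1),
          mul_pos ha hd, mul_pos hb hd, mul_pos ha hb]
  · -- inverse identity
    rw [hM1, hM2, hM3, inv_fin_one' _ h1ne, inv_fin_one' _ h2ne, inv_fin_one' _ h3ne]
    apply Matrix.inv_eq_right_inv
    subst hA hB₁ hB₂ hB₃
    ext i j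
    fin_cases i <;> fin_cases j <;>
    · simp [Matrix.mul_apply, Matrix.add_apply, Fin.sum_univ_two, Matrix.one_apply]
      field_simp
      have h1 : c₁ = 2 - c₂ - c₃ := by linarith
      subst h1; ring
  · -- constant
    congr 1
    rw [hM1, hM2, hM3, hdet]
    simp only [Matrix.det_fin_one_of]
    have hr : ∀ c : ℝ, 0 < c → c < 1 → (c * (1 - c)) ^ c = c ^ c * (1 - c) ^ c := fun c hc hc' =>
      Real.mul_rpow hc.le (by linarith)
    rw [hr c₁ h1p h1l, hr c₂ h2p h2l, hr c₃ h3p h3l]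
    have he : ∀ c : ℝ, 0 < c → c < 1 → (1 - c) ^ (1 - c) = (1 - c) / (1 - c) ^ c := by
      intro c hc hc'
      rw [eq_div_iff (ne_of_gt (Real.rpow_pos_of_pos (by linarith) c)),
        ← Real.rpow_add (by linarith : (0:ℝ) < 1 - c)]
      norm_num
    rw [he c₁ h1p h1l, he c₂ h2p h2l, he c₃ h3p h3l]
    have p1 := Real.rpow_pos_of_pos h1p c₁
    have p2 := Real.rpow_pos_of_pos h2p c₂
    have p3 := Real.rpow_pos_of_pos h3p c₃
    have q1 := Real.rpow_pos_of_pos ha c₁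
    have q2 := Real.rpow_pos_of_pos hb c₂
    have q3 := Real.rpow_pos_of_pos hd c₃
    field_simp
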